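/- Let q: H × X^n → R be a score function such that for every fixed r ∈ H, q(·, r) changes by at most Δ when one element of the dataset is changed. Then for every pair of neighboring datasets D, D', the distribution that selects r with probability proportional to exp(ε·q(D,r)/(2Δ)) and the corresponding distribution for D' satisfy: for all r, the ratio of probabilities is between e^{−ε} and e^{ε} (i.e., the exponential mechanism is ε-differentially private), assuming H is finite. -/

import Mathlib

/-- Two datasets are neighboring if they differ in at most one coordinate. -/
def Neighboring {X : Type*} {n : ℕ} (D D' : Fin n → X) : Prop :=
  ∃ i, ∀ j, j ≠ i → D j = D' j

lemma exp_mech_key {H : Type*} [Fintype H] [Nonempty H] (ε Δ : ℝ) (hε : 0 ≤ ε) (hΔ : 0 < Δ)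
    (f g : H → ℝ) (h : ∀ r, |f r - g r| ≤ Δ) (r : H) :
    Real.exp (ε * f r / (2 * Δ)) / ∑ r', Real.exp (ε * f r' / (2 * Δ))
      ≤ Real.exp ε * (Real.exp (ε * g r / (2 * Δ)) / ∑ r', Real.exp (ε * g r' / (2 * Δ))) := by
  have hSf : (0:ℝ) < ∑ r', Real.exp (ε * f r' / (2 * Δ)) :=
    Finset.sum_pos (fun i _ => Real.exp_pos _) Finset.univ_nonempty
  have hSg : (0:ℝ) < ∑ r', Real.exp (ε * g r' / (2 * Δ)) :=
    Finset.sum_pos (fun i _ => Real.exp_pos _) Finset.univ_nonempty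
  have step : ∀ a b : ℝ, a - b ≤ Δ →
      ε * a / (2 * Δ) ≤ ε / 2 + ε * b / (2 * Δ) := by
    intro a b hab
    have heq : (ε/2 + ε*b/(2*Δ)) - ε*a/(2*Δ) = (ε*Δ + ε*(b - a))/(2*Δ) := by
      field_simp; ring
    have hnn : 0 ≤ (ε/2 + ε*b/(2*Δ)) - ε*a/(2*Δ) := by
      rw [heq]
      apply div_nonneg _ (by linarith)
      nlinarith [mul_le_mul_of_nonneg_left hab hε]
    linarith
  have hnum : Real.exp (ε * f r / (2 * Δ)) ≤ Real.exp (ε/2) * Real.exp (ε * g r / (2 * Δ)) := by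
    rw [← Real.exp_add]
    exact Real.exp_le_exp.2 (step _ _ (abs_le.1 (h r)).2)
  have hden : ∑ r', Real.exp (ε * g r' / (2 * Δ))
      ≤ Real.exp (ε/2) * ∑ r', Real.exp (ε * f r' / (2 * Δ)) := by
    rw [Finset.mul_sum]
    apply Finset.sum_le_sum
    intro i _
    rw [← Real.exp_add]
    exact Real.exp_le_exp.2 (step _ _ (by linarith [(abs_le.1 (h i)).1]))
  rw [mul_div_assoc', div_le_div_iff₀ hSf hSg]
  calc Real.exp (ε * f r / (2 * Δ)) * ∑ r', Real.exp (ε * g r' / (2 * Δ))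
      ≤ Real.exp (ε/2) * Real.exp (ε * g r / (2 * Δ)) *
        (Real.exp (ε/2) * ∑ r', Real.exp (ε * f r' / (2 * Δ))) := by
        apply mul_le_mul hnum hden (le_of_lt hSg)
        positivity
    _ = Real.exp ε * Real.exp (ε * g r / (2 * Δ)) * ∑ r', Real.exp (ε * f r' / (2 * Δ)) := by
        rw [show (ε:ℝ) = ε/2 + ε/2 by ring, Real.exp_add]
        ring_nf

/-- The exponential mechanism is `ε`-differentially private: if `q(·, r)` has sensitivity
at most `Δ` for each outcome `r`, then for neighboring datasets `D, D'` the probability of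
selecting any outcome `r` (proportional to `exp(ε q(D,r)/(2Δ))`) changes by a factor of at
most `e^ε` in either direction. -/
theorem exponential_mechanism_private {X H : Type*} [Fintype H] [Nonempty H]
    (n : ℕ) (ε Δ : ℝ) (hε : 0 ≤ ε) (hΔ : 0 < Δ)
    (q : (Fin n → X) → H → ℝ)
    (hsens : ∀ D D' : Fin n → X, Neighboring D D' → ∀ r : H, |q D r - q D' r| ≤ Δ) :
    ∀ D D' : Fin n → X, Neighboring D D' → ∀ r : H,
      Real.exp (-ε) *
          (Real.exp (ε * q D' r / (2 * Δ)) / ∑ r', Real.exp (ε * q D' r' / (2 * Δ)))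
        ≤ Real.exp (ε * q D r / (2 * Δ)) / ∑ r', Real.exp (ε * q D r' / (2 * Δ)) ∧
      Real.exp (ε * q D r / (2 * Δ)) / ∑ r', Real.exp (ε * q D r' / (2 * Δ))
        ≤ Real.exp ε *
          (Real.exp (ε * q D' r / (2 * Δ)) / ∑ r', Real.exp (ε * q D' r' / (2 * Δ))) := by
  intro D D' hN r
  have h1 : ∀ s, |q D s - q D' s| ≤ Δ := hsens D D' hN
  have h2 : ∀ s, |q D' s - q D s| ≤ Δ := fun s => by rw [abs_sub_comm]; exact h1 s
  constructor
  · have := exp_mech_key ε Δ hε hΔ (q D') (q D) h2 r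
    rw [Real.exp_neg]
    rw [inv_mul_le_iff₀ (Real.exp_pos ε)] at *
    linarith
  · exact exp_mech_key ε Δ hε hΔ (q D) (q D') h1 r
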